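/- Let u* be the unique minimizer of Φ̃ and y* = Hu* + d. Then for every η > 0 and every u ∈ ℝ^N, the decentralized update u⁺ = u − η F(u) satisfies the one-step bound ‖u⁺ − u*‖ ≤ (√(1 − 2mη + L²η²) + cη) ‖u − u*‖ + η ‖(Hᵀ − H_diag) ∇Φ²(y*)‖, where m = m_u + σ_min(H)² m_y, c = σ_max(H − H_diag) σ_max(H) L_y, L = L_u + σ_max(H)² L_y (note 1 − 2mη + L²η² ≥ 0 since m ≤ L). -/

import Mathlib

open RealInnerProductSpace

/-- Largest singular value of a square matrix: the operator 2-norm of `v ↦ M v`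
on Euclidean space. -/
noncomputable def sigmaMax {N : ℕ} (M : Matrix (Fin N) (Fin N) ℝ) : ℝ :=
  ‖Matrix.toEuclideanCLM (𝕜 := ℝ) M‖

/-- Smallest singular value of a square matrix: the infimum of `‖M v‖` over the
unit sphere of Euclidean space. -/
noncomputable def sigmaMin {N : ℕ} (M : Matrix (Fin N) (Fin N) ℝ) : ℝ :=
  sInf ((fun v : EuclideanSpace ℝ (Fin N) => ‖Matrix.toEuclideanCLM (𝕜 := ℝ) M v‖) '' {v | ‖v‖ = 1})

/-- Matrix-vector multiplication as a map on Euclidean space. -/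
noncomputable def mulV {N : ℕ} (M : Matrix (Fin N) (Fin N) ℝ) (v : EuclideanSpace ℝ (Fin N)) :
    EuclideanSpace ℝ (Fin N) :=
  Matrix.toEuclideanCLM (𝕜 := ℝ) M v

section Aux

open InnerProductSpace ContinuousLinearMap

variable {E : Type*} [NormedAddCommGroup E] [InnerProductSpace ℝ E] [CompleteSpace E]

lemma aux_grad_affine_comp (Φ : E → ℝ) (A : E →L[ℝ] E) (d : E) (u : E) (g : E)
    (hg : HasGradientAt Φ g (A u + d)) :
    HasGradientAt (fun u => Φ (A u + d)) (adjoint A g) u := by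
  have h1 : HasFDerivAt Φ (toDual ℝ E g) (A u + d) := hg.hasFDerivAt
  have h2 : HasFDerivAt (fun u : E => A u + d) A u := by
    simpa using (A.hasFDerivAt (x := u)).add_const d
  have h3 := h1.comp u h2
  have heq : (toDual ℝ E g).comp A = toDual ℝ E (adjoint A g) := by
    ext v
    simp [toDual_apply_apply, adjoint_inner_left]
  rw [hasGradientAt_iff_hasFDerivAt, ← heq]
  exact h3

lemma aux_grad_add (f1 f2 : E → ℝ) (g1 g2 : E) (x : E)
    (h1 : HasGradientAt f1 g1 x) (h2 : HasGradientAt f2 g2 x) :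
    HasGradientAt (fun x => f1 x + f2 x) (g1 + g2) x := by
  rw [hasGradientAt_iff_hasFDerivAt] at *
  rw [map_add]
  exact h1.add h2

lemma aux_min_grad_zero (f : E → ℝ) (a : E) (g : E) (hmin : ∀ x, f a ≤ f x)
    (hg : HasGradientAt f g a) : g = 0 := by
  have : IsLocalMin f a := Filter.Eventually.of_forall hmin
  have h0 := this.hasFDerivAt_eq_zero hg.hasFDerivAt
  have h1 : toDual ℝ E g = toDual ℝ E 0 := by
    rw [map_zero, ← h0]
  exact (toDual ℝ E).injective h1

lemma aux_contract (m L η : ℝ) (hη : 0 < η) (hmL : m ≤ L) (a g : E)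
    (hmono : m * ‖a‖ ^ 2 ≤ ⟪g, a⟫) (hlip : ‖g‖ ≤ L * ‖a‖) :
    0 ≤ 1 - 2 * m * η + L ^ 2 * η ^ 2 ∧
      ‖a - η • g‖ ≤ Real.sqrt (1 - 2 * m * η + L ^ 2 * η ^ 2) * ‖a‖ := by
  have hQ : 0 ≤ 1 - 2 * m * η + L ^ 2 * η ^ 2 := by
    have h1 : (0:ℝ) ≤ (1 - L * η) ^ 2 := sq_nonneg _
    have h2 : (0:ℝ) ≤ 2 * (L - m) * η := by
      have := sub_nonneg.mpr hmL; positivity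
    nlinarith
  refine ⟨hQ, ?_⟩
  have hsq : ‖a - η • g‖ ^ 2 ≤ (1 - 2 * m * η + L ^ 2 * η ^ 2) * ‖a‖ ^ 2 := by
    have hexp : ‖a - η • g‖ ^ 2 = ‖a‖ ^ 2 - 2 * (η * ⟪g, a⟫) + η ^ 2 * ‖g‖ ^ 2 := by
      rw [norm_sub_sq_real, real_inner_smul_right, real_inner_comm,
        norm_smul, Real.norm_eq_abs, mul_pow, sq_abs]
    have hg2 : ‖g‖ ^ 2 ≤ L ^ 2 * ‖a‖ ^ 2 := by
      have := mul_self_le_mul_self (norm_nonneg g) hlip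
      nlinarith [norm_nonneg g, norm_nonneg a]
    have hin : η * (m * ‖a‖ ^ 2) ≤ η * ⟪g, a⟫ := mul_le_mul_of_nonneg_left hmono hη.le
    rw [hexp]
    nlinarith [sq_nonneg η]
  calc ‖a - η • g‖ = Real.sqrt (‖a - η • g‖ ^ 2) := (Real.sqrt_sq (norm_nonneg _)).symm
    _ ≤ Real.sqrt ((1 - 2 * m * η + L ^ 2 * η ^ 2) * ‖a‖ ^ 2) := Real.sqrt_le_sqrt hsq
    _ = Real.sqrt (1 - 2 * m * η + L ^ 2 * η ^ 2) * ‖a‖ := by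
        rw [Real.sqrt_mul hQ, Real.sqrt_sq (norm_nonneg _)]

variable {N : ℕ}

lemma aux_adj_eq (H : Matrix (Fin N) (Fin N) ℝ) :
    adjoint (Matrix.toEuclideanCLM (𝕜 := ℝ) H) = Matrix.toEuclideanCLM (𝕜 := ℝ) H.transpose := by
  rw [← Matrix.conjTranspose_eq_transpose_of_trivial, ← star_eq_adjoint]
  exact (map_star (Matrix.toEuclideanCLM (𝕜 := ℝ)) H).symm

lemma aux_sigmaMin_nonneg (M : Matrix (Fin N) (Fin N) ℝ) : 0 ≤ sigmaMin M := by
  apply Real.sInf_nonneg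
  rintro x ⟨v, hv, rfl⟩
  positivity

lemma aux_sigmaMin_le (M : Matrix (Fin N) (Fin N) ℝ) (v : EuclideanSpace ℝ (Fin N))
    (hv : ‖v‖ = 1) : sigmaMin M ≤ ‖Matrix.toEuclideanCLM (𝕜 := ℝ) M v‖ := by
  apply csInf_le
  · exact ⟨0, by rintro x ⟨w, hw, rfl⟩; positivity⟩
  · exact ⟨v, hv, rfl⟩

lemma aux_sigmaMin_mul_le (M : Matrix (Fin N) (Fin N) ℝ) (v : EuclideanSpace ℝ (Fin N)) :
    sigmaMin M * ‖v‖ ≤ ‖Matrix.toEuclideanCLM (𝕜 := ℝ) M v‖ := by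
  rcases eq_or_ne v 0 with rfl | hv
  · simp
  · have hnv : (0:ℝ) < ‖v‖ := norm_pos_iff.mpr hv
    have h1 : ‖(‖v‖⁻¹ : ℝ) • v‖ = 1 := by
      rw [norm_smul]; simp [abs_of_pos hnv, inv_mul_cancel₀ hnv.ne']
    have := aux_sigmaMin_le M _ h1
    rw [map_smul, norm_smul] at this
    simp only [Real.norm_eq_abs, abs_of_pos (inv_pos.mpr hnv)] at this
    calc sigmaMin M * ‖v‖ ≤ (‖v‖⁻¹ * ‖Matrix.toEuclideanCLM (𝕜 := ℝ) M v‖) * ‖v‖ :=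
          mul_le_mul_of_nonneg_right this hnv.le
      _ = ‖Matrix.toEuclideanCLM (𝕜 := ℝ) M v‖ := by field_simp

lemma aux_sigmaMin_le_sigmaMax (hN : 0 < N) (M : Matrix (Fin N) (Fin N) ℝ) :
    sigmaMin M ≤ sigmaMax M := by
  set v := EuclideanSpace.single (⟨0, hN⟩ : Fin N) (1:ℝ) with hvdef
  have hv : ‖v‖ = 1 := by simp [hvdef]
  have h1 := (Matrix.toEuclideanCLM (𝕜 := ℝ) M).le_opNorm v
  rw [hv, mul_one] at h1
  exact (aux_sigmaMin_le M v hv).trans h1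

lemma aux_sigmaMax_transpose (M : Matrix (Fin N) (Fin N) ℝ) :
    sigmaMax M.transpose = sigmaMax M := by
  unfold sigmaMax
  rw [← aux_adj_eq]
  exact LinearIsometryEquiv.norm_map (adjoint (𝕜 := ℝ)) (Matrix.toEuclideanCLM (𝕜 := ℝ) M)

end Aux

set_option maxHeartbeats 2000000 in
open InnerProductSpace ContinuousLinearMap in
/-- one-step bound for the decentralized update.
For every `η > 0` and every `u`, the update `u⁺ = u − η F(u)` satisfies
`‖u⁺ − u*‖ ≤ (√(1 − 2mη + L²η²) + cη)‖u − u*‖ + η‖(Hᵀ − H_diag)∇Φ²(y*)‖`,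
and `1 − 2mη + L²η² ≥ 0` since `m ≤ L`. -/
theorem stmt5 {N : ℕ} (hN : 0 < N)
(H : Matrix (Fin N) (Fin N) ℝ) (d : EuclideanSpace ℝ (Fin N))
    (Φ1 Φ2 : EuclideanSpace ℝ (Fin N) → ℝ)
    (mu Lu my Ly : ℝ)
    (hmu : 0 < mu) (hmuLu : mu ≤ Lu) (hmy : 0 < my) (hmyLy : my ≤ Ly)
    (hΦ1diff : Differentiable ℝ Φ1) (hΦ2diff : Differentiable ℝ Φ2)
    (hΦ1mono : ∀ a b, mu * ‖a - b‖ ^ 2 ≤ ⟪gradient Φ1 a - gradient Φ1 b, a - b⟫)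
    (hΦ1lip : ∀ a b, ‖gradient Φ1 a - gradient Φ1 b‖ ≤ Lu * ‖a - b‖)
    (hΦ2mono : ∀ a b, my * ‖a - b‖ ^ 2 ≤ ⟪gradient Φ2 a - gradient Φ2 b, a - b⟫)
    (hΦ2lip : ∀ a b, ‖gradient Φ2 a - gradient Φ2 b‖ ≤ Ly * ‖a - b‖)
    (Hdiag : Matrix (Fin N) (Fin N) ℝ)
    (hHdiag : Hdiag = Matrix.diagonal (fun i => H i i))
    (F : EuclideanSpace ℝ (Fin N) → EuclideanSpace ℝ (Fin N))
    (hF : ∀ u, F u = gradient Φ1 u + mulV Hdiag (gradient Φ2 (mulV H u + d)))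
    (m c L : ℝ)
    (hm : m = mu + sigmaMin H ^ 2 * my)
    (hc : c = sigmaMax (H - Hdiag) * sigmaMax H * Ly)
    (hL : L = Lu + sigmaMax H ^ 2 * Ly)
    (ustar ystar : EuclideanSpace ℝ (Fin N))
    (hustar : ∀ u, Φ1 ustar + Φ2 (mulV H ustar + d) ≤ Φ1 u + Φ2 (mulV H u + d))
    (hystar : ystar = mulV H ustar + d) :
    ∀ η : ℝ, 0 < η → ∀ u : EuclideanSpace ℝ (Fin N),
      0 ≤ 1 - 2 * m * η + L ^ 2 * η ^ 2 ∧
        ‖(u - η • F u) - ustar‖ ≤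
          (Real.sqrt (1 - 2 * m * η + L ^ 2 * η ^ 2) + c * η) * ‖u - ustar‖ +
            η * ‖mulV (H.transpose - Hdiag) (gradient Φ2 ystar)‖ := by
  intro η hη u
  set A : EuclideanSpace ℝ (Fin N) →L[ℝ] EuclideanSpace ℝ (Fin N) :=
    Matrix.toEuclideanCLM (𝕜 := ℝ) H with hA
  set At : EuclideanSpace ℝ (Fin N) →L[ℝ] EuclideanSpace ℝ (Fin N) :=
    Matrix.toEuclideanCLM (𝕜 := ℝ) H.transpose with hAt
  have hadj : adjoint A = At := aux_adj_eq H
  set G : EuclideanSpace ℝ (Fin N) → EuclideanSpace ℝ (Fin N) :=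
    fun v => gradient Φ1 v + At (gradient Φ2 (A v + d)) with hG
  -- G is the gradient of the full objective
  have hGgrad : ∀ v, HasGradientAt (fun w => Φ1 w + Φ2 (A w + d)) (G v) v := by
    intro v
    apply aux_grad_add
    · exact (hΦ1diff v).hasGradientAt
    · rw [← hadj]
      exact aux_grad_affine_comp Φ2 A d v _ ((hΦ2diff _).hasGradientAt)
  have hGstar : G ustar = 0 :=
    aux_min_grad_zero _ ustar _ (fun x => hustar x) (hGgrad ustar)
  -- notation
  set a : EuclideanSpace ℝ (Fin N) := u - ustar with ha
  set g : EuclideanSpace ℝ (Fin N) := G u - G ustar with hg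
  have hAmap : A u + d - (A ustar + d) = A a := by
    rw [ha, map_sub]; abel
  -- norms of σ's
  have hσmax0 : 0 ≤ sigmaMax H := norm_nonneg _
  have hσmin0 : 0 ≤ sigmaMin H := aux_sigmaMin_nonneg H
  have hσminmax : sigmaMin H ≤ sigmaMax H := aux_sigmaMin_le_sigmaMax hN H
  have hmL : m ≤ L := by
    rw [hm, hL]
    have : sigmaMin H ^ 2 ≤ sigmaMax H ^ 2 := by nlinarith
    nlinarith
  have hAa_le : ‖A a‖ ≤ sigmaMax H * ‖a‖ := A.le_opNorm a
  have hAa_ge : sigmaMin H * ‖a‖ ≤ ‖A a‖ := aux_sigmaMin_mul_le H a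
  -- strong monotonicity of G
  have hmonoG : m * ‖a‖ ^ 2 ≤ ⟪g, a⟫ := by
    have hsplit : ⟪g, a⟫ = ⟪gradient Φ1 u - gradient Φ1 ustar, a⟫ +
        ⟪gradient Φ2 (A u + d) - gradient Φ2 (A ustar + d), A a⟫ := by
      rw [hg, hG]
      have : gradient Φ1 u + At (gradient Φ2 (A u + d)) -
          (gradient Φ1 ustar + At (gradient Φ2 (A ustar + d))) =
          (gradient Φ1 u - gradient Φ1 ustar) +
            At (gradient Φ2 (A u + d) - gradient Φ2 (A ustar + d)) := by
        rw [map_sub]; abel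
      rw [this, inner_add_left, ← hadj, adjoint_inner_left]
    have h2 := hΦ2mono (A u + d) (A ustar + d)
    rw [hAmap] at h2
    have h1 := hΦ1mono u ustar
    have hsq : sigmaMin H ^ 2 * ‖a‖ ^ 2 ≤ ‖A a‖ ^ 2 := by
      have hnn : (0:ℝ) ≤ sigmaMin H * ‖a‖ := mul_nonneg hσmin0 (norm_nonneg a)
      have := mul_self_le_mul_self hnn hAa_ge
      nlinarith
    rw [hsplit, hm]
    nlinarith [norm_nonneg (A a)]
  -- Lipschitz bound for G
  have hlipG : ‖g‖ ≤ L * ‖a‖ := by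
    have hgeq : g = (gradient Φ1 u - gradient Φ1 ustar) +
        At (gradient Φ2 (A u + d) - gradient Φ2 (A ustar + d)) := by
      rw [hg, hG]
      show gradient Φ1 u + At (gradient Φ2 (A u + d)) -
          (gradient Φ1 ustar + At (gradient Φ2 (A ustar + d))) =
          (gradient Φ1 u - gradient Φ1 ustar) +
            At (gradient Φ2 (A u + d) - gradient Φ2 (A ustar + d))
      rw [map_sub]; abel
    have h1 := hΦ1lip u ustar
    have h2 : ‖At (gradient Φ2 (A u + d) - gradient Φ2 (A ustar + d))‖ ≤
        sigmaMax H * ‖gradient Φ2 (A u + d) - gradient Φ2 (A ustar + d)‖ := by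
      have := At.le_opNorm (gradient Φ2 (A u + d) - gradient Φ2 (A ustar + d))
      have hn : ‖At‖ = sigmaMax H := aux_sigmaMax_transpose H
      rwa [hn] at this
    have h3 := hΦ2lip (A u + d) (A ustar + d)
    rw [hAmap] at h3
    calc ‖g‖ ≤ ‖gradient Φ1 u - gradient Φ1 ustar‖ +
          ‖At (gradient Φ2 (A u + d) - gradient Φ2 (A ustar + d))‖ := by
          rw [hgeq]; exact norm_add_le _ _
      _ ≤ Lu * ‖a‖ + sigmaMax H * (Ly * ‖A a‖) := by
          have := h2.trans (mul_le_mul_of_nonneg_left h3 hσmax0)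
          linarith
      _ ≤ L * ‖a‖ := by
          rw [hL]
          have hLy0 : (0:ℝ) ≤ Ly := (hmy.trans_le hmyLy).le
          have := mul_le_mul_of_nonneg_left hAa_le (mul_nonneg hσmax0 hLy0)
          nlinarith
  obtain ⟨hQ, hcontr⟩ := aux_contract m L η hη hmL a g hmonoG hlipG
  refine ⟨hQ, ?_⟩
  -- decomposition
  set w2 : EuclideanSpace ℝ (Fin N) := gradient Φ2 (A u + d) with hw2
  set gs : EuclideanSpace ℝ (Fin N) := gradient Φ2 ystar with hgs
  set M : EuclideanSpace ℝ (Fin N) →L[ℝ] EuclideanSpace ℝ (Fin N) :=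
    Matrix.toEuclideanCLM (𝕜 := ℝ) (H.transpose - Hdiag) with hM
  set h : EuclideanSpace ℝ (Fin N) := M (w2 - gs) with hh
  set k : EuclideanSpace ℝ (Fin N) := M gs with hk
  have hMeq : M = At - Matrix.toEuclideanCLM (𝕜 := ℝ) Hdiag := by
    rw [hM, hAt, map_sub]
  have hdecomp : (u - η • F u) - ustar = (a - η • g) + η • h + η • k := by
    have hFu : F u = gradient Φ1 u + Matrix.toEuclideanCLM (𝕜 := ℝ) Hdiag w2 := hF u
    have hGu : G u = gradient Φ1 u + At w2 := rfl
    have hhk : h + k = At w2 - Matrix.toEuclideanCLM (𝕜 := ℝ) Hdiag w2 := by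
      rw [hh, hk, ← map_add, sub_add_cancel, hMeq, ContinuousLinearMap.sub_apply]
    have hgu : g = G u := by rw [hg, hGstar, sub_zero]
    have : (a - η • g) + η • h + η • k = a - η • G u + η • (h + k) := by
      rw [hgu]; module
    rw [this, hhk, hGu, hFu, ha]
    module
  -- bound on h
  have hMnorm : ‖M‖ = sigmaMax (H - Hdiag) := by
    have htr : H.transpose - Hdiag = (H - Hdiag).transpose := by
      rw [Matrix.transpose_sub, hHdiag, Matrix.diagonal_transpose]
    rw [hM, htr]
    exact aux_sigmaMax_transpose (H - Hdiag)
  have hhb : ‖h‖ ≤ c * ‖a‖ := by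
    have h1 : ‖h‖ ≤ sigmaMax (H - Hdiag) * ‖w2 - gs‖ := by
      have := M.le_opNorm (w2 - gs)
      rwa [hMnorm] at this
    have h2 : ‖w2 - gs‖ ≤ Ly * ‖A a‖ := by
      have hdiff : A u + d - ystar = A a := by
        rw [hystar]
        have heq : mulV H ustar + d = A ustar + d := rfl
        rw [heq, hAmap]
      have := hΦ2lip (A u + d) ystar
      rw [hdiff] at this
      rw [hw2, hgs]
      exact this
    have hσd0 : 0 ≤ sigmaMax (H - Hdiag) := norm_nonneg _
    calc ‖h‖ ≤ sigmaMax (H - Hdiag) * (Ly * ‖A a‖) :=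
          h1.trans (mul_le_mul_of_nonneg_left h2 hσd0)
      _ ≤ c * ‖a‖ := by
          rw [hc]
          have hLy0 : (0:ℝ) ≤ Ly := (hmy.trans_le hmyLy).le
          have := mul_le_mul_of_nonneg_left hAa_le (mul_nonneg hσd0 hLy0)
          nlinarith
  -- final assembly
  have hkeq : mulV (H.transpose - Hdiag) (gradient Φ2 ystar) = k := rfl
  rw [hdecomp, hkeq]
  calc ‖(a - η • g) + η • h + η • k‖ ≤ ‖a - η • g‖ + ‖η • h‖ + ‖η • k‖ :=
        norm_add₃_le
    _ ≤ Real.sqrt (1 - 2 * m * η + L ^ 2 * η ^ 2) * ‖a‖ + η * (c * ‖a‖) + η * ‖k‖ := by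
        rw [norm_smul, norm_smul, Real.norm_eq_abs, abs_of_pos hη]
        have := mul_le_mul_of_nonneg_left hhb hη.le
        linarith
    _ = (Real.sqrt (1 - 2 * m * η + L ^ 2 * η ^ 2) + c * η) * ‖a‖ + η * ‖k‖ := by ring
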